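/- Let φ: A → B and ψ: B → A be group homomorphisms of abelian groups with ψ ∘ φ equal to multiplication by m on A. Suppose B/φ(A), A/ψ(B), ker(φ) ∩ A, and ker(ψ) ∩ B are all finite, as are A[m], A/mA. Then #(A/mA) / #A[m] = (#(B/φ(A)) / #ker(φ)) · (#(A/ψ(B)) / #ker(ψ)). -/

import Mathlib

open Function

set_option maxHeartbeats 1000000 in
lemma chi_comp {A B C : Type*} [AddCommGroup A] [AddCommGroup B] [AddCommGroup C]
    (f : A →+ B) (g : B →+ C)
    [Finite f.ker] [Finite g.ker] [Finite (B ⧸ f.range)] [Finite (C ⧸ g.range)]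
    [Finite (g.comp f).ker] [Finite (C ⧸ (g.comp f).range)] :
    (Nat.card (C ⧸ (g.comp f).range) : ℚ) / Nat.card (g.comp f).ker =
      ((Nat.card (B ⧸ f.range) : ℚ) / Nat.card f.ker) *
      ((Nat.card (C ⧸ g.range) : ℚ) / Nat.card g.ker) := by
  classical
  -- the intermediate subgroup N = range f ⊓ ker g
  set N : AddSubgroup B := f.range ⊓ g.ker with hN
  have hfker_le : f.ker ≤ (g.comp f).ker := fun a ha => by
    simp only [AddMonoidHom.mem_ker] at ha ⊢
    simp [AddMonoidHom.comp_apply, ha]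
  -- restriction of f to ker (g∘f), landing in N
  have hmemN : ∀ x : (g.comp f).ker, f x ∈ N := fun x =>
    ⟨⟨x, rfl⟩, show g (f x) = 0 from x.2⟩
  let f' : (g.comp f).ker →+ N :=
    AddMonoidHom.codRestrict (f.comp (g.comp f).ker.subtype) N hmemN
  have hf'surj : Surjective f' := by
    rintro ⟨b, ⟨a, rfl⟩, hb2⟩
    have : a ∈ (g.comp f).ker := by simpa [AddMonoidHom.mem_ker] using hb2
    exact ⟨⟨a, this⟩, rfl⟩
  have hf'ker : f'.ker = f.ker.addSubgroupOf (g.comp f).ker := by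
    ext x
    rw [AddMonoidHom.mem_ker, AddSubgroup.mem_addSubgroupOf, AddMonoidHom.mem_ker, Subtype.ext_iff]
    exact Iff.rfl
  -- Finite N
  have hNfin : Finite N := Finite.of_surjective f' hf'surj
  -- card equation 1 : #ker(g∘f) = #N * #ker f
  have e1 : Nat.card (g.comp f).ker = Nat.card N * Nat.card f.ker := by
    rw [AddSubgroup.card_eq_card_quotient_mul_card_addSubgroup
      (f.ker.addSubgroupOf (g.comp f).ker)]
    congr 1
    · rw [← hf'ker]
      exact Nat.card_congr (QuotientAddGroup.quotientKerEquivOfSurjective f' hf'surj).toEquiv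
    · exact Nat.card_congr (AddSubgroup.addSubgroupOfEquivOfLe hfker_le).toEquiv
  -- the map q : ker g → B/range f, with kernel ≃ N and image J
  let q : g.ker →+ B ⧸ f.range := (QuotientAddGroup.mk' f.range).comp g.ker.subtype
  set J : AddSubgroup (B ⧸ f.range) := q.range with hJ
  have hqker : q.ker = f.range.addSubgroupOf g.ker := by
    ext x
    simp [q, AddMonoidHom.mem_ker, AddSubgroup.mem_addSubgroupOf,
      QuotientAddGroup.eq_zero_iff]
  have hNequiv : (f.range.addSubgroupOf g.ker) ≃ N :=
    ⟨fun x => ⟨x.1.1, x.2, x.1.2⟩, fun y => ⟨⟨y.1, y.2.2⟩, y.2.1⟩,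
      fun x => rfl, fun y => rfl⟩
  -- card equation 2 : #ker g = #J * #N
  have e2 : Nat.card g.ker = Nat.card J * Nat.card N := by
    rw [AddSubgroup.card_eq_card_quotient_mul_card_addSubgroup
      (f.range.addSubgroupOf g.ker)]
    congr 1
    · rw [← hqker]
      exact Nat.card_congr (QuotientAddGroup.quotientKerEquivRange q).toEquiv
    · exact Nat.card_congr hNequiv
  -- the induced map ḡ : B/range f → C/range (g∘f)
  have hle1 : f.range ≤ (g.comp f).range.comap g := by
    rintro b ⟨a, rfl⟩
    exact ⟨a, rfl⟩
  let gbar : (B ⧸ f.range) →+ (C ⧸ (g.comp f).range) :=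
    QuotientAddGroup.map f.range (g.comp f).range g hle1
  set M : AddSubgroup (C ⧸ (g.comp f).range) := gbar.range with hM
  have hgbarker : gbar.ker = J := by
    ext x
    refine QuotientAddGroup.induction_on x fun b => ?_
    constructor
    · intro hb
      have hb' : g b ∈ (g.comp f).range := by
        have : gbar ((b : B ⧸ f.range)) = 0 := hb
        rw [QuotientAddGroup.map_mk] at this
        exact (QuotientAddGroup.eq_zero_iff _).mp this
      obtain ⟨a, ha⟩ := hb'
      have hk : b - f a ∈ g.ker := by
        simp only [AddMonoidHom.mem_ker, map_sub]
        rw [show g (f a) = g b from ha]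
        simp
      refine ⟨⟨b - f a, hk⟩, ?_⟩
      have : ((b - f a : B) : B ⧸ f.range) = (b : B ⧸ f.range) := by
        rw [QuotientAddGroup.eq]
        simpa using ⟨a, rfl⟩
      simpa [q] using this
    · rintro ⟨⟨k, hk⟩, hkb⟩
      have hkb' : ((k : B) : B ⧸ f.range) = (b : B ⧸ f.range) := hkb
      rw [QuotientAddGroup.eq] at hkb'
      obtain ⟨a, ha⟩ := hkb'
      -- ha : f a = -k + b
      have hb : g b ∈ (g.comp f).range := by
        refine ⟨a, ?_⟩
        have : g (f a) = g (-k + b) := by rw [ha]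
        simpa [AddMonoidHom.mem_ker.mp hk] using this
      show gbar ((b : B ⧸ f.range)) = 0
      rw [QuotientAddGroup.map_mk]
      exact (QuotientAddGroup.eq_zero_iff _).mpr hb
  -- card equation 3 : #(B/range f) = #M * #J
  have e3 : Nat.card (B ⧸ f.range) = Nat.card M * Nat.card J := by
    rw [AddSubgroup.card_eq_card_quotient_mul_card_addSubgroup gbar.ker, hgbarker]
    congr 1
    rw [← hgbarker]
    exact Nat.card_congr (QuotientAddGroup.quotientKerEquivRange gbar).toEquiv
  -- the projection π : C/range(g∘f) → C/range g
  have hle2 : (g.comp f).range ≤ g.range.comap (AddMonoidHom.id C) := by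
    rintro c ⟨a, rfl⟩
    exact ⟨f a, rfl⟩
  let pi : (C ⧸ (g.comp f).range) →+ (C ⧸ g.range) :=
    QuotientAddGroup.map (g.comp f).range g.range (AddMonoidHom.id C) hle2
  have hpisurj : Surjective pi := by
    intro x
    refine QuotientAddGroup.induction_on x fun c => ⟨(c : C ⧸ (g.comp f).range), rfl⟩
  have hpiker : pi.ker = M := by
    ext x
    refine QuotientAddGroup.induction_on x fun c => ?_
    constructor
    · intro hc
      have hc' : c ∈ g.range := by
        have : pi ((c : C ⧸ (g.comp f).range)) = 0 := hc
        rw [QuotientAddGroup.map_mk] at this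
        exact (QuotientAddGroup.eq_zero_iff _).mp this
      obtain ⟨b, hb⟩ := hc'
      exact ⟨(b : B ⧸ f.range), by rw [show gbar ((b : B ⧸ f.range)) = ((g b : C) : C ⧸ (g.comp f).range) from rfl, hb]⟩
    · rintro ⟨y, hy⟩
      revert hy
      refine QuotientAddGroup.induction_on y fun b hy => ?_
      have hy' : ((g b : C) : C ⧸ (g.comp f).range) = (c : C ⧸ (g.comp f).range) := hy
      rw [QuotientAddGroup.eq] at hy'
      obtain ⟨a, ha⟩ := hy'
      have hc : c ∈ g.range := ⟨b + f a, by rw [map_add]; rw [show g (f a) = -g b + c from ha]; abel⟩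
      show pi ((c : C ⧸ (g.comp f).range)) = 0
      rw [QuotientAddGroup.map_mk]
      exact (QuotientAddGroup.eq_zero_iff _).mpr hc
  -- card equation 4 : #(C/range(g∘f)) = #(C/range g) * #M
  have e4 : Nat.card (C ⧸ (g.comp f).range) = Nat.card (C ⧸ g.range) * Nat.card M := by
    rw [AddSubgroup.card_eq_card_quotient_mul_card_addSubgroup pi.ker, hpiker]
    congr 1
    rw [← hpiker]
    exact Nat.card_congr
      (QuotientAddGroup.quotientKerEquivOfSurjective pi hpisurj).toEquiv
  -- combine
  have key : Nat.card (C ⧸ (g.comp f).range) * (Nat.card f.ker * Nat.card g.ker)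
      = (Nat.card (B ⧸ f.range) * Nat.card (C ⧸ g.range)) * Nat.card (g.comp f).ker := by
    rw [e1, e2, e3, e4]; ring
  have h1 : (Nat.card (g.comp f).ker : ℚ) ≠ 0 := Nat.cast_ne_zero.mpr Nat.card_pos.ne'
  have h2 : ((Nat.card f.ker : ℚ)) * (Nat.card g.ker : ℚ) ≠ 0 :=
    mul_ne_zero (Nat.cast_ne_zero.mpr Nat.card_pos.ne') (Nat.cast_ne_zero.mpr Nat.card_pos.ne')
  rw [div_mul_div_comm, div_eq_div_iff h1 h2]
  exact_mod_cast key

/-- For homomorphisms `φ : A → B`, `ψ : B → A` of abelian groups with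
`ψ ∘ φ = m` on `A`, and with all kernels and cokernels involved finite,
`#(A/mA) / #A[m] = (#(B/φA) / #ker φ) · (#(A/ψB) / #ker ψ)`. -/
theorem stmt_3 (A B : Type*) [AddCommGroup A] [AddCommGroup B] (m : ℕ) (hm : 0 < m)
    (φ : A →+ B) (ψ : B →+ A) (hψφ : ∀ a : A, ψ (φ a) = m • a)
    (mA : AddSubgroup A) (hmA : ∀ a : A, a ∈ mA ↔ ∃ x : A, m • x = a)
    [Finite (B ⧸ φ.range)] [Finite (A ⧸ ψ.range)]
    [Finite φ.ker] [Finite ψ.ker]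
    [Finite {a : A // m • a = 0}] [Finite (A ⧸ mA)] :
    (Nat.card (A ⧸ mA) : ℚ) / Nat.card {a : A // m • a = 0} =
      ((Nat.card (B ⧸ φ.range) : ℚ) / Nat.card φ.ker) *
        ((Nat.card (A ⧸ ψ.range) : ℚ) / Nat.card ψ.ker) := by
  have hrange : (ψ.comp φ).range = mA := by
    ext a
    rw [hmA]
    constructor
    · rintro ⟨x, rfl⟩; exact ⟨x, (hψφ x).symm⟩
    · rintro ⟨x, rfl⟩; exact ⟨x, hψφ x⟩
  have hkerequiv : {a : A // m • a = 0} ≃ (ψ.comp φ).ker :=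
    Equiv.subtypeEquiv (Equiv.refl A) fun a => by
      simp [AddMonoidHom.mem_ker, hψφ a]
  subst hrange
  have : Finite (ψ.comp φ).ker := Finite.of_equiv _ hkerequiv
  rw [Nat.card_congr hkerequiv]
  exact chi_comp φ ψ
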